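/- For a quasi order (X, ≼), the set of finitary downward closed subsets of X (downward closures of finite subsets), ordered by inclusion, is a well quasi order if and only if (X, ≼) is a well quasi order. -/

import Mathlib

/-- The downward closure of a set `U` with respect to `r`. -/
def downClosure {X : Type*} (r : X → X → Prop) (U : Set X) : Set X :=
  {x | ∃ u ∈ U, r x u}

/-- A set is a finitary downward closed set if it is the downward closure of a finite set. -/
def FinitaryDownClosed {X : Type*} (r : X → X → Prop) (D : Set X) : Prop :=
  ∃ U : Set X, U.Finite ∧ D = downClosure r U

theorem forall₂_mem_exists {X Y : Type*} {r : X → Y → Prop} :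
    ∀ {l₁ : List X} {l₂ : List Y}, List.Forall₂ r l₁ l₂ → ∀ {a}, a ∈ l₁ → ∃ b ∈ l₂, r a b
  | _, _, List.Forall₂.cons h hl, a, ha => by
    rcases List.mem_cons.1 ha with rfl | ha
    · exact ⟨_, List.mem_cons_self, h⟩
    · obtain ⟨b, hb, hrb⟩ := forall₂_mem_exists hl ha
      exact ⟨b, List.mem_cons_of_mem _ hb, hrb⟩

/-- The finitary downward closed subsets of `X`, ordered by inclusion,
form a wqo iff `(X, r)` is a wqo. -/
theorem finitaryDownClosed_wqo_iff
    {X : Type*} (r : X → X → Prop)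
    (hrefl : Reflexive r) (htrans : Transitive r) :
    (∀ f : ℕ → Set X, (∀ n, FinitaryDownClosed r (f n)) →
        ∃ i j : ℕ, i < j ∧ f i ⊆ f j) ↔
      (∀ f : ℕ → X, ∃ i j : ℕ, i < j ∧ r (f i) (f j)) := by
  constructor
  · intro H f
    obtain ⟨i, j, hij, hsub⟩ := H (fun n => downClosure r {f n})
      (fun n => ⟨{f n}, Set.finite_singleton _, rfl⟩)
    have hi : f i ∈ downClosure r {f i} := ⟨f i, rfl, hrefl _⟩
    obtain ⟨u, hu, hru⟩ := hsub hi
    rw [Set.mem_singleton_iff] at hu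
    exact ⟨i, j, hij, hu ▸ hru⟩
  · intro H f hf
    haveI : Std.Refl r := ⟨hrefl⟩
    haveI : IsTrans X r := ⟨htrans⟩
    haveI : IsPreorder X r := {}
    choose U hUfin hUeq using hf
    have hpwo : (Set.univ : Set X).PartiallyWellOrderedOn r := Set.partiallyWellOrderedOn_iff_exists_lt.2 fun g _ => H g
    have higman := hpwo.partiallyWellOrderedOn_sublistForall₂ (r := r)
    obtain ⟨i, j, hij, hsf⟩ := higman.exists_lt (f := fun n => (hUfin n).toFinset.toList)
      (fun n x _ => Set.mem_univ x)
    refine ⟨i, j, hij, ?_⟩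
    intro x hx
    rw [hUeq i] at hx
    obtain ⟨u, hu, hru⟩ := hx
    have humem : u ∈ (hUfin i).toFinset.toList := by
      simp [Set.Finite.mem_toFinset, hu]
    obtain ⟨l, hfor, hsub⟩ := List.sublistForall₂_iff.1 hsf
    obtain ⟨v, hv, hrv⟩ := forall₂_mem_exists hfor humem
    have hvmem : v ∈ U j := by
      have := hsub.subset hv
      simpa [Set.Finite.mem_toFinset] using this
    rw [hUeq j]
    exact ⟨v, hvmem, htrans hru hrv⟩
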